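/- Let Γ be a visibility representation of a connected finite simple planar graph G with n vertices and m edges, and suppose that Γ has no redundant columns. Then the width of Γ is at most max{m, n}. -/

import Mathlib

open Set

/-- A point in the plane. -/
abbrev Pt : Type := ℝ × ℝ

/-- A point has integer coordinates. -/
def IsIntPt (p : Pt) : Prop := (∃ a : ℤ, p.1 = (a : ℝ)) ∧ (∃ b : ℤ, p.2 = (b : ℝ))

/-- The (closed) segments of a polygonal chain, as pairs of consecutive corners. -/
def chainSegs (l : List Pt) : List (Pt × Pt) := l.zip l.tail

/-- The set of points covered by a polygonal chain. -/
def chainSet (l : List Pt) : Set Pt := ⋃ s ∈ chainSegs l, segment ℝ s.1 s.2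

/-- A polygonal chain is simple (non-self-intersecting): it has at least two
corners, all corners are distinct, and two of its segments meet only if they are
consecutive, and then only in their shared corner. -/
def IsSimpleChain (l : List Pt) : Prop :=
  2 ≤ l.length ∧ l.Nodup ∧
    ∀ i j : ℕ, i < j → ∀ (hi : i < (chainSegs l).length) (hj : j < (chainSegs l).length),
      segment ℝ ((chainSegs l).get ⟨i, hi⟩).1 ((chainSegs l).get ⟨i, hi⟩).2 ∩
        segment ℝ ((chainSegs l).get ⟨j, hj⟩).1 ((chainSegs l).get ⟨j, hj⟩).2 ⊆
        if j = i + 1 then {((chainSegs l).get ⟨j, hj⟩).1} else (∅ : Set Pt)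

/-- Every interior corner of the chain is a genuine bend (a direction change). -/
def GenuineBends (l : List Pt) : Prop :=
  ∀ i : ℕ, ∀ h : i + 2 < l.length,
    ¬ Collinear ℝ ({l.get ⟨i, by omega⟩, l.get ⟨i + 1, by omega⟩, l.get ⟨i + 2, h⟩} : Set Pt)

/-- The chain is a y-monotone path (horizontal segments allowed). -/
def IsMonoChain (l : List Pt) : Prop :=
  (l.map Prod.snd).Chain' (· ≤ ·) ∨ (l.map Prod.snd).Chain' (fun a b => b ≤ a)

/-- All segments of the chain are horizontal or vertical. -/
def IsOrthoChain (l : List Pt) : Prop :=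
  ∀ s ∈ chainSegs l, s.1.1 = s.2.1 ∨ s.1.2 = s.2.2

/-- A poly-line drawing of a graph `G`: every vertex is a point, and every edge
`uv` is the polygonal chain through the list `bends u v` of bend points
(listed in order from `u` to `v`). -/
structure PolylineDrawing {V : Type*} (G : SimpleGraph V) where
  pos : V → Pt
  bends : V → V → List Pt
  bends_symm : ∀ u v, bends v u = (bends u v).reverse

namespace PolylineDrawing

variable {V : Type*} {G : SimpleGraph V}

/-- The corner list of the curve of edge `uv`. -/
def chain (D : PolylineDrawing G) (u v : V) : List Pt :=
  D.pos u :: (D.bends u v ++ [D.pos v])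

/-- The set of points of the curve of edge `uv`. -/
def curve (D : PolylineDrawing G) (u v : V) : Set Pt := chainSet (D.chain u v)

/-- The defining elements of the drawing: vertex points and bends. -/
def points (D : PolylineDrawing G) : Set Pt :=
  Set.range D.pos ∪ ⋃ (u) (v) (_ : G.Adj u v), {p | p ∈ D.bends u v}

/-- The drawing is planar: vertex points are pairwise distinct, every edge curve
is a simple chain whose interior corners are genuine bends, an edge curve contains
no vertex point other than its endpoints, and two distinct edge curves intersect
only in points of common endpoints. -/
def IsPlanar (D : PolylineDrawing G) : Prop :=
  Function.Injective D.pos ∧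
  (∀ u v, G.Adj u v → IsSimpleChain (D.chain u v) ∧ GenuineBends (D.chain u v)) ∧
  (∀ u v w, G.Adj u v → w ≠ u → w ≠ v → D.pos w ∉ D.curve u v) ∧
  (∀ u v x y, G.Adj u v → G.Adj x y → s(u, v) ≠ s(x, y) →
    D.curve u v ∩ D.curve x y ⊆ D.pos '' (({u, v} : Set V) ∩ ({x, y} : Set V)))

/-- All defining elements have integer coordinates. -/
def IntCoords (D : PolylineDrawing G) : Prop := ∀ p ∈ D.points, IsIntPt p

/-- A straight-line drawing: no edge has bends. -/
def IsStraightLine (D : PolylineDrawing G) : Prop := ∀ u v : V, D.bends u v = []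

/-- Every edge curve is a y-monotone path. -/
def IsYMonotone (D : PolylineDrawing G) : Prop :=
  ∀ u v, G.Adj u v → IsMonoChain (D.chain u v)

/-- The drawing fits (after translation) in the rows `1, …, h`. -/
def InHeight (D : PolylineDrawing G) (h : ℕ) : Prop :=
  ∃ y0 : ℤ, ∀ p ∈ D.points, (y0 : ℝ) ≤ p.2 ∧ p.2 ≤ (y0 : ℝ) + (h : ℝ) - 1

/-- The drawing fits (after translation) in the columns `1, …, w`. -/
def InWidth (D : PolylineDrawing G) (w : ℕ) : Prop :=
  ∃ x0 : ℤ, ∀ p ∈ D.points, (x0 : ℝ) ≤ p.1 ∧ p.1 ≤ (x0 : ℝ) + (w : ℝ) - 1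

end PolylineDrawing

/-- An axis-parallel box (possibly degenerated to a segment or a point). -/
structure Box where
  x1 : ℝ
  x2 : ℝ
  y1 : ℝ
  y2 : ℝ
  hx : x1 ≤ x2
  hy : y1 ≤ y2

/-- The set of points of a box. -/
def Box.pts (b : Box) : Set Pt := Set.Icc b.x1 b.x2 ×ˢ Set.Icc b.y1 b.y2

/-- An orthogonal drawing of a graph `G`: every vertex is an axis-aligned box, and
every edge `uv` is an axis-parallel polygonal chain `chain u v` (its first corner is
the attachment point on the box of `u`, its last corner the attachment point on the
box of `v`). -/
structure OrthDrawing {V : Type*} (G : SimpleGraph V) where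
  box : V → Box
  chain : V → V → List Pt
  chain_symm : ∀ u v, chain v u = (chain u v).reverse

namespace OrthDrawing

variable {V : Type*} {G : SimpleGraph V}

/-- The set of points of the curve of edge `uv`. -/
def curve (D : OrthDrawing G) (u v : V) : Set Pt := chainSet (D.chain u v)

/-- The defining elements of the drawing: corners of vertex boxes, and corners
(attachment points and bends) of edge chains. -/
def points (D : OrthDrawing G) : Set Pt :=
  (⋃ v, ({((D.box v).x1, (D.box v).y1), ((D.box v).x1, (D.box v).y2),
          ((D.box v).x2, (D.box v).y1), ((D.box v).x2, (D.box v).y2)} : Set Pt)) ∪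
    ⋃ (u) (v) (_ : G.Adj u v), {p | p ∈ D.chain u v}

/-- All points covered by the drawing (boxes and edge curves). -/
def region (D : OrthDrawing G) : Set Pt :=
  (⋃ v, (D.box v).pts) ∪ ⋃ (u) (v) (_ : G.Adj u v), D.curve u v

/-- The drawing is planar: vertex boxes are pairwise disjoint; every edge curve is a
simple axis-parallel chain, with genuine bends, joining the boxes of its endpoints;
an edge curve meets a vertex box only in its attachment points; and two distinct
edge curves intersect only in common endpoints. -/
def IsPlanar (D : OrthDrawing G) : Prop :=
  (∀ u v : V, u ≠ v → Disjoint (D.box u).pts (D.box v).pts) ∧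
  (∀ u v, G.Adj u v → IsSimpleChain (D.chain u v) ∧ IsOrthoChain (D.chain u v) ∧
      GenuineBends (D.chain u v)) ∧
  (∀ u v, G.Adj u v → ∃ p q l, D.chain u v = p :: (l ++ [q]) ∧
      p ∈ (D.box u).pts ∧ q ∈ (D.box v).pts) ∧
  (∀ u v w, G.Adj u v → D.curve u v ∩ (D.box w).pts ⊆
      {p | (w = u ∧ (D.chain u v).head? = some p) ∨
           (w = v ∧ (D.chain u v).getLast? = some p)}) ∧
  (∀ u v x y, G.Adj u v → G.Adj x y → s(u, v) ≠ s(x, y) →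
      D.curve u v ∩ D.curve x y ⊆
        {p | ((D.chain u v).head? = some p ∨ (D.chain u v).getLast? = some p) ∧
             ((D.chain x y).head? = some p ∨ (D.chain x y).getLast? = some p)})

/-- A flat drawing: every vertex box is degenerated to a horizontal segment. -/
def IsFlat (D : OrthDrawing G) : Prop := ∀ v, (D.box v).y1 = (D.box v).y2

/-- A visibility representation: an orthogonal drawing without bends, i.e. every
edge is a single horizontal or vertical segment. -/
def IsVR (D : OrthDrawing G) : Prop := ∀ u v, G.Adj u v → (D.chain u v).length = 2

/-- Every edge curve is a y-monotone path. -/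
def IsYMonotone (D : OrthDrawing G) : Prop := ∀ u v, G.Adj u v → IsMonoChain (D.chain u v)

/-- All defining elements have integer coordinates. -/
def IntCoords (D : OrthDrawing G) : Prop := ∀ p ∈ D.points, IsIntPt p

/-- The drawing fits (after translation) in the rows `1, …, h`. -/
def InHeight (D : OrthDrawing G) (h : ℕ) : Prop :=
  ∃ y0 : ℤ, ∀ p ∈ D.points, (y0 : ℝ) ≤ p.2 ∧ p.2 ≤ (y0 : ℝ) + (h : ℝ) - 1

/-- The drawing fits (after translation) in the columns `1, …, w`. -/
def InWidth (D : OrthDrawing G) (w : ℕ) : Prop :=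
  ∃ x0 : ℤ, ∀ p ∈ D.points, (x0 : ℝ) ≤ p.1 ∧ p.1 ≤ (x0 : ℝ) + (w : ℝ) - 1

end OrthDrawing

/-- The (integer) column `c` is occupied by the drawing. -/
def OrthDrawing.ColOccupied {V : Type*} {G : SimpleGraph V} (D : OrthDrawing G)
    (c : ℤ) : Prop :=
  ∃ p ∈ D.region, p.1 = (c : ℝ)

/-- Column `c` contains a vertical edge segment. -/
def OrthDrawing.HasVerticalEdgeAt {V : Type*} {G : SimpleGraph V} (D : OrthDrawing G)
    (c : ℤ) : Prop :=
  ∃ u v, G.Adj u v ∧ ∃ p q : Pt, D.chain u v = [p, q] ∧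
    p.1 = (c : ℝ) ∧ q.1 = (c : ℝ) ∧ p.2 ≠ q.2

/-- Column `c` is the only column intersected by the box of some vertex. -/
def OrthDrawing.SoleBoxColumnAt {V : Type*} {G : SimpleGraph V} (D : OrthDrawing G)
    (c : ℤ) : Prop :=
  ∃ v, (D.box v).x1 = (c : ℝ) ∧ (D.box v).x2 = (c : ℝ)

/-- No occupied column is redundant, i.e. every occupied column contains a vertical
edge segment or is the only column intersected by some vertex box. -/
def OrthDrawing.NoRedundantColumns {V : Type*} {G : SimpleGraph V}
    (D : OrthDrawing G) : Prop :=
  ∀ c : ℤ, D.ColOccupied c → D.HasVerticalEdgeAt c ∨ D.SoleBoxColumnAt c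

section Aux

variable {V : Type*} {G : SimpleGraph V} {D : OrthDrawing G}

lemma chainSet_pair (p q : Pt) : chainSet [p, q] = segment ℝ p q := by
  simp [chainSet, chainSegs]

lemma chain_pair (hpl : D.IsPlanar) (hvr : D.IsVR) {u v : V} (h : G.Adj u v) :
    ∃ p q : Pt, D.chain u v = [p, q] ∧ p ∈ (D.box u).pts ∧ q ∈ (D.box v).pts ∧ p ≠ q ∧
      (p.1 = q.1 ∨ p.2 = q.2) := by
  obtain ⟨p, q, l, hc, hp, hq⟩ := hpl.2.2.1 u v h
  have hlen := hvr u v h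
  rw [hc] at hlen
  simp [List.length_append] at hlen
  have hl : l = [] := hlen
  subst hl
  simp at hc
  have hnd := (hpl.2.1 u v h).1.2.1
  rw [hc] at hnd
  have hpq : p ≠ q := by simpa using hnd
  have hortho := (hpl.2.1 u v h).2.1
  rw [hc] at hortho
  have := hortho (p, q) (by simp [chainSegs])
  exact ⟨p, q, hc, hp, hq, hpq, this⟩

lemma corner_mem_pts (b : Box) :
    (b.x1, b.y1) ∈ b.pts ∧ (b.x2, b.y1) ∈ b.pts ∧ (b.x1, b.y2) ∈ b.pts ∧ (b.x2, b.y2) ∈ b.pts := by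
  refine ⟨?_, ?_, ?_, ?_⟩ <;>
    simp [Box.pts, Set.mem_prod, le_refl, b.hx, b.hy]

lemma box_subset_region (v : V) : (D.box v).pts ⊆ D.region :=
  fun p hp => Or.inl (Set.mem_iUnion.2 ⟨v, hp⟩)

lemma curve_subset_region {u v : V} (h : G.Adj u v) : D.curve u v ⊆ D.region := by
  intro p hp
  exact Or.inr (Set.mem_iUnion.2 ⟨u, Set.mem_iUnion.2 ⟨v, Set.mem_iUnion.2 ⟨h, hp⟩⟩⟩)

lemma corner_mem_points (v : V) :
    ((D.box v).x1, (D.box v).y1) ∈ D.points ∧ ((D.box v).x2, (D.box v).y1) ∈ D.points ∧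
    ((D.box v).x1, (D.box v).y2) ∈ D.points ∧ ((D.box v).x2, (D.box v).y2) ∈ D.points := by
  refine ⟨?_, ?_, ?_, ?_⟩ <;> exact Or.inl (Set.mem_iUnion.2 ⟨v, by simp⟩)

lemma chain_mem_points {u v : V} (h : G.Adj u v) {p : Pt} (hp : p ∈ D.chain u v) :
    p ∈ D.points :=
  Or.inr (Set.mem_iUnion.2 ⟨u, Set.mem_iUnion.2 ⟨v, Set.mem_iUnion.2 ⟨h, hp⟩⟩⟩)

lemma points_subset_region (hpl : D.IsPlanar) (hvr : D.IsVR) : D.points ⊆ D.region := by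
  rintro p (hp | hp)
  · simp only [Set.mem_iUnion] at hp
    obtain ⟨v, hv⟩ := hp
    apply box_subset_region v
    have hc := corner_mem_pts (D.box v)
    rcases hv with h | h | h | h <;> subst h
    exacts [hc.1, hc.2.2.1, hc.2.1, hc.2.2.2]
  · simp only [Set.mem_iUnion] at hp
    obtain ⟨u, v, h, hv⟩ := hp
    apply curve_subset_region h
    obtain ⟨a, b, hc, _, _, _, _⟩ := chain_pair hpl hvr h
    rw [OrthDrawing.curve, hc, chainSet_pair]
    rw [hc] at hv
    simp at hv
    rcases hv with rfl | rfl
    exacts [left_mem_segment ℝ _ _, right_mem_segment ℝ _ _]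

lemma points_finite [Fintype V] : D.points.Finite := by
  apply Set.Finite.union
  · exact Set.finite_iUnion fun v => (Set.finite_singleton _).insert _ |>.insert _ |>.insert _
  · have : (⋃ (u : V) (v : V) (_ : G.Adj u v), {p : Pt | p ∈ D.chain u v}) ⊆
        ⋃ (u : V) (v : V), {p : Pt | p ∈ D.chain u v} := by
      refine Set.iUnion_mono fun u => Set.iUnion_mono fun v => Set.iUnion_subset fun _ => subset_rfl
    exact (Set.finite_iUnion fun u => Set.finite_iUnion fun v => (D.chain u v).finite_toSet).subset this

end Aux
section Aux2

variable {V : Type*} {G : SimpleGraph V} {D : OrthDrawing G}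

lemma box_preconnected (b : Box) : IsPreconnected b.pts :=
  ((convex_Icc b.x1 b.x2).prod (convex_Icc b.y1 b.y2)).isPreconnected

lemma region_preconnected (hconn : G.Connected) (hpl : D.IsPlanar) (hvr : D.IsVR) :
    IsPreconnected D.region := by
  obtain ⟨v₀⟩ := hconn.nonempty
  set p₀ : Pt := ((D.box v₀).x1, (D.box v₀).y1) with hp₀
  have hp₀box : p₀ ∈ (D.box v₀).pts := (corner_mem_pts (D.box v₀)).1
  have hp₀reg : p₀ ∈ D.region := box_subset_region v₀ hp₀box
  have hCsub : connectedComponentIn D.region p₀ ⊆ D.region := connectedComponentIn_subset _ _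
  -- a preconnected subset of the region meeting connectedComponentIn D.region p₀ lies in connectedComponentIn D.region p₀
  have key : ∀ s : Set Pt, IsPreconnected s → s ⊆ D.region → (s ∩ connectedComponentIn D.region p₀).Nonempty → s ⊆ connectedComponentIn D.region p₀ := by
    intro s hs hsub ⟨y, hys, hyC⟩
    have := hs.subset_connectedComponentIn hys hsub
    rwa [← connectedComponentIn_eq hyC] at this
  have curveC : ∀ u v : V, G.Adj u v → (D.box u).pts ⊆ connectedComponentIn D.region p₀ → D.curve u v ⊆ connectedComponentIn D.region p₀ := by
    intro u v h hu
    obtain ⟨p, q, hc, hp, hq, _, _⟩ := chain_pair hpl hvr h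
    have hcurve : D.curve u v = segment ℝ p q := by rw [OrthDrawing.curve, hc, chainSet_pair]
    apply key
    · rw [hcurve]; exact (convex_segment p q).isPreconnected
    · exact curve_subset_region h
    · exact ⟨p, by rw [hcurve]; exact left_mem_segment ℝ p q, hu hp⟩
  have step : ∀ u v : V, G.Adj u v → (D.box u).pts ⊆ connectedComponentIn D.region p₀ → (D.box v).pts ⊆ connectedComponentIn D.region p₀ := by
    intro u v h hu
    obtain ⟨p, q, hc, hp, hq, _, _⟩ := chain_pair hpl hvr h
    apply key _ (box_preconnected _) (box_subset_region v)
    refine ⟨q, hq, curveC u v h hu ?_⟩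
    rw [OrthDrawing.curve, hc, chainSet_pair]
    exact right_mem_segment ℝ p q
  have base : (D.box v₀).pts ⊆ connectedComponentIn D.region p₀ :=
    (box_preconnected _).subset_connectedComponentIn hp₀box (box_subset_region v₀)
  have walktrans : ∀ a b : V, G.Walk a b →
      (D.box a).pts ⊆ connectedComponentIn D.region p₀ →
      (D.box b).pts ⊆ connectedComponentIn D.region p₀ := by
    intro a b w
    induction w with
    | nil => exact id
    | cons h p ih => exact fun ha => ih (step _ _ h ha)
  have boxC : ∀ v : V, (D.box v).pts ⊆ connectedComponentIn D.region p₀ := by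
    intro v
    obtain ⟨w⟩ := hconn.preconnected v₀ v
    exact walktrans v₀ v w base
  have hreg : D.region ⊆ connectedComponentIn D.region p₀ := by
    rintro x (hx | hx)
    · simp only [Set.mem_iUnion] at hx
      obtain ⟨v, hv⟩ := hx
      exact boxC v hv
    · simp only [Set.mem_iUnion] at hx
      obtain ⟨u, v, h, hv⟩ := hx
      exact curveC u v h (boxC u) hv
  have : D.region = connectedComponentIn D.region p₀ := le_antisymm hreg hCsub
  rw [this]
  exact isPreconnected_connectedComponentIn

lemma occupied_of_between (hpre : IsPreconnected D.region) {a b : Pt}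
    (ha : a ∈ D.region) (hb : b ∈ D.region) {x : ℝ} (h1 : a.1 ≤ x) (h2 : x ≤ b.1) :
    ∃ p ∈ D.region, p.1 = x := by
  have himg : IsPreconnected (Prod.fst '' D.region) :=
    hpre.image _ continuous_fst.continuousOn
  have hoc := himg.ordConnected
  have : x ∈ Prod.fst '' D.region :=
    hoc.out (Set.mem_image_of_mem _ ha) (Set.mem_image_of_mem _ hb) ⟨h1, h2⟩
  obtain ⟨p, hp, he⟩ := this
  exact ⟨p, hp, he⟩

end Aux2
section Aux3

variable {V : Type*} {G : SimpleGraph V} {D : OrthDrawing G}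

/-- The edge `e` is drawn as a vertical segment. -/
def EdgeVert (D : OrthDrawing G) (e : Sym2 V) : Prop :=
  ∃ u v, G.Adj u v ∧ s(u, v) = e ∧ ∃ p q : Pt, D.chain u v = [p, q] ∧ p.1 = q.1

lemma edge_chain_cases (D : OrthDrawing G) {u v u' v' : V} (he : s(u, v) = s(u', v'))
    {p q p' q' : Pt} (hc : D.chain u v = [p, q]) (hc' : D.chain u' v' = [p', q']) :
    (p' = p ∧ q' = q) ∨ (p' = q ∧ q' = p) := by
  rcases Sym2.eq_iff.mp he with ⟨rfl, rfl⟩ | ⟨rfl, rfl⟩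
  · rw [hc] at hc'
    simp at hc'
    exact Or.inl ⟨hc'.1.symm, hc'.2.symm⟩
  · have hs := D.chain_symm u v
    rw [hc] at hs
    rw [hs] at hc'
    simp at hc'
    exact Or.inr ⟨hc'.1.symm, hc'.2.symm⟩

lemma mem_sole_box {v : V} {c : ℝ} (h1 : (D.box v).x1 = c) (h2 : (D.box v).x2 = c)
    {p : Pt} (hp : p ∈ (D.box v).pts) : p.1 = c := by
  obtain ⟨⟨ha, hb⟩, -⟩ := hp
  rw [h1] at ha; rw [h2] at hb; linarith

lemma not_vert_of_sole (hpl : D.IsPlanar) (hvr : D.IsVR) {v : V} {c : ℤ}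
    (h1 : (D.box v).x1 = (c : ℝ)) (h2 : (D.box v).x2 = (c : ℝ))
    (hnv : ¬ D.HasVerticalEdgeAt c) {w : V} (hadj : G.Adj v w) : ¬ EdgeVert D s(v, w) := by
  rintro ⟨a, b, hab, he, p, q, hcab, hx⟩
  obtain ⟨p', q', hc', hp', hq', hne', -⟩ := chain_pair hpl hvr hab
  rw [hcab] at hc'
  simp at hc'
  obtain ⟨rfl, rfl⟩ := hc'
  have hy : p.2 ≠ q.2 := by
    intro hy
    exact hne' (Prod.ext hx hy)
  have hxc : p.1 = (c : ℝ) := by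
    rcases Sym2.eq_iff.mp he with ⟨rfl, rfl⟩ | ⟨rfl, rfl⟩
    · exact mem_sole_box h1 h2 hp'
    · rw [hx]; exact mem_sole_box h1 h2 hq'
  exact hnv ⟨a, b, hab, p, q, hcab, hxc, by rw [← hx]; exact hxc, hy⟩

lemma count_key {V : Type} [Fintype V] {G : SimpleGraph V} (hconn : G.Connected)
    (D : OrthDrawing G) (hpl : D.IsPlanar) (hvr : D.IsVR)
    (I : Finset ℤ) (hI : ∀ c ∈ I, D.HasVerticalEdgeAt c ∨ D.SoleBoxColumnAt c) :
    I.card ≤ max G.edgeSet.ncard (Fintype.card V) := by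
  classical
  obtain ⟨v₀⟩ := hconn.nonempty
  set I₁ := I.filter (fun c => D.HasVerticalEdgeAt c) with hI₁def
  set I₂ := I.filter (fun c => ¬ D.HasVerticalEdgeAt c) with hI₂def
  have hsplit : I₁.card + I₂.card = I.card :=
    Finset.card_filter_add_card_filter_not (s := I) (p := fun c => D.HasVerticalEdgeAt c)
  have hw1' : ∀ c : ℤ, ∃ uv : V × V, c ∈ I₁ → G.Adj uv.1 uv.2 ∧ ∃ p q : Pt,
      D.chain uv.1 uv.2 = [p, q] ∧ p.1 = (c : ℝ) ∧ q.1 = (c : ℝ) ∧ p.2 ≠ q.2 := by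
    intro c
    by_cases hc : c ∈ I₁
    · obtain ⟨u, v, h1, p, q, h2, h3, h4, h5⟩ := (Finset.mem_filter.mp hc).2
      exact ⟨(u, v), fun _ => ⟨h1, p, q, h2, h3, h4, h5⟩⟩
    · exact ⟨(v₀, v₀), fun h => absurd h hc⟩
  choose w1 hw1 using hw1'
  have hw2' : ∀ c : ℤ, ∃ v : V, c ∈ I₂ →
      (D.box v).x1 = (c : ℝ) ∧ (D.box v).x2 = (c : ℝ) := by
    intro c
    by_cases hc : c ∈ I₂
    · have := hI c (Finset.mem_filter.mp hc).1
      rcases this with h | ⟨v, hv⟩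
      · exact absurd h (Finset.mem_filter.mp hc).2
      · exact ⟨v, fun _ => hv⟩
    · exact ⟨v₀, fun h => absurd h hc⟩
  choose vtx hvtx using hw2'
  set Ev := G.edgeFinset.filter (fun e => EdgeVert D e) with hEvdef
  set Eh := G.edgeFinset.filter (fun e => ¬ EdgeVert D e) with hEhdef
  have hEsplit : Ev.card + Eh.card = G.edgeFinset.card :=
    Finset.card_filter_add_card_filter_not (s := G.edgeFinset)
      (p := fun e => EdgeVert D e)
  have hvtx_inj : Set.InjOn vtx I₂ := by
    intro c hc c' hc' he
    have h := (hvtx c hc).1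
    have h' := (hvtx c' hc').1
    rw [he, h'] at h
    exact_mod_cast h.symm
  have hcard1 : I₁.card ≤ Ev.card := by
    apply Finset.card_le_card_of_injOn (fun c => s((w1 c).1, (w1 c).2))
    · intro c hc
      obtain ⟨hadj, p, q, hch, hpx, hqx, hpq⟩ := hw1 c hc
      rw [hEvdef, Finset.mem_coe, Finset.mem_filter, SimpleGraph.mem_edgeFinset, SimpleGraph.mem_edgeSet]
      exact ⟨hadj, ⟨_, _, hadj, rfl, p, q, hch, by rw [hpx, hqx]⟩⟩
    · intro c hc c' hc' heq
      obtain ⟨hadj, p, q, hch, hpx, hqx, -⟩ := hw1 c hc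
      obtain ⟨hadj', p', q', hch', hpx', hqx', -⟩ := hw1 c' hc'
      have : (c' : ℝ) = (c : ℝ) := by
        rcases edge_chain_cases D heq hch hch' with ⟨h1, -⟩ | ⟨h1, -⟩
        · rw [← hpx', h1, hpx]
        · rw [← hpx', h1, hqx]
      exact_mod_cast this.symm
  have hmn : G.edgeFinset.card = G.edgeSet.ncard := by
    rw [← SimpleGraph.coe_edgeFinset, Set.ncard_coe_finset]
  rcases Finset.eq_empty_or_nonempty I₁ with h1e | ⟨c₁, hc₁⟩
  · have h2 : I₂.card ≤ Fintype.card V := by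
      have := Finset.card_le_card_of_injOn vtx (fun c _ => Finset.mem_univ (vtx c)) hvtx_inj
      simpa using this
    have : I.card = I₂.card := by rw [← hsplit, h1e]; simp
    rw [this]
    exact le_max_of_le_right h2
  · -- there is a vertical edge; its first endpoint u₀
    obtain ⟨hadj₀, p₀, q₀, hch₀, hp₀x, hq₀x, -⟩ := hw1 c₁ hc₁
    set u₀ := (w1 c₁).1 with hu₀def
    have hu₀ : ∀ c ∈ I₂, vtx c ≠ u₀ := by
      intro c hc he
      obtain ⟨hx1, hx2⟩ := hvtx c hc
      obtain ⟨p', q', hc', hp', hq', -, -⟩ := chain_pair hpl hvr hadj₀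
      rw [hch₀] at hc'
      simp at hc'
      obtain ⟨rfl, rfl⟩ := hc'
      rw [he] at hx1 hx2
      have : p₀.1 = (c : ℝ) := mem_sole_box hx1 hx2 hp'
      have hcc : (c₁ : ℝ) = (c : ℝ) := by rw [← hp₀x, this]
      have hcc' : c₁ = c := by exact_mod_cast hcc
      have := (Finset.mem_filter.mp hc).2
      rw [← hcc'] at this
      exact this (Finset.mem_filter.mp hc₁).2
    have hnx' : ∀ v : V, ∃ v' : V, v ≠ u₀ → G.Adj v v' ∧ G.dist v' u₀ + 1 = G.dist v u₀ := by
      intro v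
      by_cases hv : v = u₀
      · exact ⟨u₀, fun h => absurd hv h⟩
      · have hd : G.dist v u₀ ≠ 0 := (hconn.pos_dist_of_ne hv).ne'
        obtain ⟨pw, hpw⟩ := (hconn.preconnected v u₀).exists_walk_length_eq_dist
        cases pw with
        | nil => rw [← hpw] at hd; simp at hd
        | @cons _ x _ h tail =>
          refine ⟨x, fun _ => ⟨h, ?_⟩⟩
          have h1 : G.dist x u₀ ≤ tail.length := SimpleGraph.dist_le tail
          obtain ⟨qw, hqw⟩ := (hconn.preconnected x u₀).exists_walk_length_eq_dist
          have h2 : G.dist v u₀ ≤ qw.length + 1 := by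
            have := SimpleGraph.dist_le (SimpleGraph.Walk.cons h qw)
            simpa using this
          rw [hqw] at h2
          have h3 : tail.length + 1 = G.dist v u₀ := by simpa using hpw
          omega
    choose nxt hnxt using hnx'
    have hcard2 : I₂.card ≤ Eh.card := by
      apply Finset.card_le_card_of_injOn (fun c => s(vtx c, nxt (vtx c)))
      · intro c hc
        have hvne := hu₀ c hc
        obtain ⟨hadj, -⟩ := hnxt (vtx c) hvne
        rw [hEhdef, Finset.mem_coe, Finset.mem_filter, SimpleGraph.mem_edgeFinset, SimpleGraph.mem_edgeSet]
        exact ⟨hadj, not_vert_of_sole hpl hvr (hvtx c hc).1 (hvtx c hc).2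
          (Finset.mem_filter.mp hc).2 hadj⟩
      · intro c hc c' hc' heq
        rcases Sym2.eq_iff.mp heq with ⟨h1, -⟩ | ⟨h1, h2⟩
        · exact hvtx_inj hc hc' h1
        · exfalso
          have d1 := (hnxt (vtx c) (hu₀ c hc)).2
          have d2 := (hnxt (vtx c') (hu₀ c' hc')).2
          rw [h2] at d1
          rw [← h1] at d2
          omega
    have : I.card ≤ G.edgeFinset.card := by
      rw [← hsplit, ← hEsplit]
      omega
    rw [hmn] at this
    exact le_max_of_le_left this

end Aux3
/-- Any visibility representation without redundant columns of a
connected finite simple graph `G` with `n` vertices and `m` edges has width at most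
`max m n`. -/
theorem VR_no_redundant_columns_width {V : Type} [Fintype V] (G : SimpleGraph V)
    (hconn : G.Connected)
    (D : OrthDrawing G) (hpl : D.IsPlanar) (hvr : D.IsVR) (hint : D.IntCoords)
    (hred : D.NoRedundantColumns) :
    D.InWidth (max G.edgeSet.ncard (Fintype.card V)) := by
  classical
  have hpre := region_preconnected hconn hpl hvr
  obtain ⟨v₀⟩ := hconn.nonempty
  have hne : D.points.Nonempty := ⟨_, (corner_mem_points v₀).1⟩
  have hfin : D.points.Finite := points_finite
  obtain ⟨pmax, hpmaxF, hpmax⟩ := hfin.toFinset.exists_max_image Prod.fst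
    (hfin.toFinset_nonempty.mpr hne)
  obtain ⟨pmin, hpminF, hpmin⟩ := hfin.toFinset.exists_min_image Prod.fst
    (hfin.toFinset_nonempty.mpr hne)
  have hpmaxmem : pmax ∈ D.points := hfin.mem_toFinset.mp hpmaxF
  have hpminmem : pmin ∈ D.points := hfin.mem_toFinset.mp hpminF
  obtain ⟨⟨cmax, hcmax⟩, -⟩ := hint pmax hpmaxmem
  obtain ⟨⟨cmin, hcmin⟩, -⟩ := hint pmin hpminmem
  have hminmax : pmin.1 ≤ pmax.1 := hpmin pmax hpmaxF
  have hcle : cmin ≤ cmax := by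
    have : (cmin : ℝ) ≤ (cmax : ℝ) := by rw [← hcmin, ← hcmax]; exact hminmax
    exact_mod_cast this
  have hocc : ∀ c ∈ Finset.Icc cmin cmax, D.ColOccupied c := by
    intro c hc
    rw [Finset.mem_Icc] at hc
    have h1 : pmin.1 ≤ (c : ℝ) := by
      rw [hcmin]; exact_mod_cast hc.1
    have h2 : (c : ℝ) ≤ pmax.1 := by
      rw [hcmax]; exact_mod_cast hc.2
    exact occupied_of_between hpre (points_subset_region hpl hvr hpminmem)
      (points_subset_region hpl hvr hpmaxmem) h1 h2
  have hcard := count_key hconn D hpl hvr (Finset.Icc cmin cmax)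
    (fun c hc => hred c (hocc c hc))
  set w := max G.edgeSet.ncard (Fintype.card V) with hw
  have hcardeq : ((Finset.Icc cmin cmax).card : ℤ) = cmax + 1 - cmin :=
    Int.card_Icc_of_le _ _ (by omega)
  have hkey : cmax ≤ cmin + (w : ℤ) - 1 := by
    have : ((Finset.Icc cmin cmax).card : ℤ) ≤ (w : ℤ) := by exact_mod_cast hcard
    omega
  refine ⟨cmin, fun p hp => ⟨?_, ?_⟩⟩
  · rw [← hcmin]
    exact hpmin p (hfin.mem_toFinset.mpr hp)
  · have h1 : p.1 ≤ (cmax : ℝ) := by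
      rw [← hcmax]; exact hpmax p (hfin.mem_toFinset.mpr hp)
    have h2 : (cmax : ℝ) ≤ (cmin : ℝ) + (w : ℝ) - 1 := by
      have h3 : ((cmax : ℤ) : ℝ) ≤ ((cmin + (w : ℤ) - 1 : ℤ) : ℝ) := by exact_mod_cast hkey
      push_cast at h3
      linarith
    linarith
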